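/- arXiv:1606.05127 — 2 statements merged into one kernel-verified Lean document; each statement's English description precedes it below -/
import Mathlib

section
/- Let K ≥ 0, m > 0, γ̄ > 0, and let f be the Rician shadowed probability density function with mean γ̄ and shape parameters K, m. Then for every s ∈ ℝ and every z ≥ 0, the lower incomplete MGF is given in closed form by ∫_0^z e^{s x} f(x) dx = (m^m (1+K) / (γ̄ (K+m)^m)) · z · Φ₂( 1−m, m ; 2 ; (s − (1+K)/γ̄) z , (s − (1+K)m/(γ̄(K+m))) z ). -/
open MeasureTheory Real

/-- Pochhammer symbol `(a)ₙ = a (a+1) ⋯ (a+n-1)`. -/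
noncomputable def poch (a : ℝ) (n : ℕ) : ℝ := ∏ j ∈ Finset.range n, (a + j)

/-- Kummer confluent hypergeometric function `₁F₁(a;b;w)`. -/
noncomputable def kummerM (a b w : ℝ) : ℝ :=
  ∑' n : ℕ, poch a n / poch b n * w ^ n / (Nat.factorial n : ℝ)

/-- Humbert bivariate confluent hypergeometric function `Φ₂(b₁,b₂;c;x,y)`. -/
noncomputable def Phi2 (b₁ b₂ c x y : ℝ) : ℝ :=
  ∑' m : ℕ, ∑' n : ℕ,
    poch b₁ m * poch b₂ n / poch c (m + n) * x ^ m * y ^ n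
      / ((Nat.factorial m : ℝ) * (Nat.factorial n : ℝ))

/-- The Rician shadowed probability density function with mean `γ̄` and shape
parameters `K ≥ 0`, `m > 0` (the κ-μ shadowed density with `μ = 1`, `κ = K`). -/
noncomputable def ricianShadowedPDF (K m γbar : ℝ) (x : ℝ) : ℝ :=
  if x < 0 then 0 else
    (1 + K) * m ^ m / (γbar * (K + m) ^ m)
      * Real.exp (-((1 + K) * x) / γbar)
      * kummerM m 1 (K * (1 + K) * x / ((K + m) * γbar))

/-! ### Auxiliary lemmas on the Pochhammer symbol -/

lemma poch_zero (a : ℝ) : poch a 0 = 1 := by simp [poch]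

lemma poch_succ (a : ℝ) (n : ℕ) : poch a (n+1) = poch a n * (a + n) := by
  simp [poch, Finset.prod_range_succ]

lemma poch_one (n : ℕ) : poch 1 n = (Nat.factorial n : ℝ) := by
  induction n with
  | zero => simp [poch_zero]
  | succ k ih => rw [poch_succ, ih, Nat.factorial_succ]; push_cast; ring

lemma poch_two (n : ℕ) : poch 2 n = (Nat.factorial (n+1) : ℝ) := by
  induction n with
  | zero => simp [poch_zero]
  | succ k ih => rw [poch_succ, ih, Nat.factorial_succ (k+1)]; push_cast; ring

lemma poch_add (a : ℝ) (m n : ℕ) : poch a (m + n) = poch a m * poch (a + m) n := by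
  induction n with
  | zero => simp [poch_zero]
  | succ k ih => rw [← Nat.add_assoc, poch_succ, ih, poch_succ]; push_cast; ring

lemma poch_nat_cast (n : ℕ) (M : ℕ) :
    (Nat.factorial n : ℝ) * poch ((n : ℝ) + 1) M = (Nat.factorial (n + M) : ℝ) := by
  induction M with
  | zero => simp [poch_zero]
  | succ k ih =>
    rw [poch_succ, ← mul_assoc, ih, ← Nat.add_assoc, Nat.factorial_succ]
    push_cast; ring

lemma abs_poch_le (a : ℝ) (n : ℕ) : |poch a n| ≤ (|a| + 1) ^ n * (Nat.factorial n : ℝ) := by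
  induction n with
  | zero => simp [poch_zero]
  | succ k ih =>
    rw [poch_succ, abs_mul, pow_succ, Nat.factorial_succ]
    have h1 : |a + (k:ℝ)| ≤ (|a| + 1) * ((k:ℝ)+1) := by
      calc |a + (k:ℝ)| ≤ |a| + k := by simpa using abs_add_le a (k:ℝ)
        _ ≤ (|a| + 1) * ((k:ℝ)+1) := by nlinarith [abs_nonneg a, Nat.cast_nonneg (α := ℝ) k]
    calc |poch a k| * |a + (k:ℝ)| ≤ ((|a| + 1)^k * k.factorial) * ((|a| + 1) * ((k:ℝ)+1)) := by
          apply mul_le_mul ih h1 (abs_nonneg _)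
          positivity
      _ = (|a| + 1)^k * (|a|+1) * (((k:ℝ)+1) * k.factorial) := by ring
      _ = (|a| + 1) ^ k * (|a| + 1) * ((k+1).factorial : ℝ) := by
          rw [Nat.factorial_succ]; push_cast; ring

/-- Vandermonde convolution for Pochhammer symbols. -/
lemma poch_vandermonde (M : ℕ) (a b : ℝ) :
    ∑ r ∈ Finset.range (M+1), (M.choose r : ℝ) * poch a r * poch b (M - r)
      = poch (a + b) M := by
  induction M with
  | zero => simp [poch_zero]
  | succ M ih =>
    have h0 : ∀ r ∈ Finset.range (M+1),
        ((M+1).choose (r+1) : ℝ) * poch a (r+1) * poch b (M+1-(r+1))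
          = ((M.choose r : ℝ) * poch a r * poch b (M-r)) * (a+r)
            + (M.choose (r+1) : ℝ) * poch a (r+1) * poch b (M-r) := by
      intro r _
      have h1 : M+1-(r+1) = M-r := by omega
      rw [h1, Nat.choose_succ_succ, poch_succ]
      push_cast; ring
    rw [Finset.sum_range_succ' _ (M+1), Finset.sum_congr rfl h0, Finset.sum_add_distrib]
    have hU : (∑ r ∈ Finset.range (M+1),
          (M.choose (r+1) : ℝ) * poch a (r+1) * poch b (M-r))
        + ((M+1).choose 0 : ℝ) * poch a 0 * poch b (M+1-0)
        = ∑ r ∈ Finset.range (M+1), (M.choose r : ℝ) * poch a r * poch b (M+1-r) := by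
      have e1 : ∀ r, (M.choose (r+1) : ℝ) * poch a (r+1) * poch b (M-r)
          = (M.choose (r+1) : ℝ) * poch a (r+1) * poch b (M+1-(r+1)) := by
        intro r; congr 2; omega
      simp_rw [e1]
      rw [show (((M+1).choose 0 : ℕ) : ℝ) = ((M.choose 0 : ℕ) : ℝ) by simp]
      rw [← Finset.sum_range_succ' (fun r => (M.choose r : ℝ) * poch a r * poch b (M+1-r)) (M+1)]
      rw [Finset.sum_range_succ]
      simp [Nat.choose_succ_self]
    rw [add_assoc, hU, ← Finset.sum_add_distrib]
    have h2 : ∀ r ∈ Finset.range (M+1),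
        ((M.choose r : ℝ) * poch a r * poch b (M-r)) * (a+r)
          + (M.choose r : ℝ) * poch a r * poch b (M+1-r)
        = ((M.choose r : ℝ) * poch a r * poch b (M-r)) * (a + b + M) := by
      intro r hr
      have hrM : r ≤ M := by simpa [Nat.lt_succ_iff] using hr
      have h3 : M+1-r = (M-r)+1 := by omega
      have h4 : ((M-r : ℕ) : ℝ) = (M : ℝ) - r := by
        rw [Nat.cast_sub hrM]
      rw [h3, poch_succ, h4]
      ring
    rw [Finset.sum_congr rfl h2, ← Finset.sum_mul, ih, poch_succ]
lemma core_identity (m p α : ℝ) (N : ℕ) :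
    ∑ ij ∈ Finset.HasAntidiagonal.antidiagonal N,
      poch (1-m) ij.1 * poch m ij.2 / poch 2 (ij.1 + ij.2) * p ^ ij.1 * (p + α) ^ ij.2
        / ((Nat.factorial ij.1 : ℝ) * (Nat.factorial ij.2 : ℝ))
    = (∑ kl ∈ Finset.HasAntidiagonal.antidiagonal N,
        p ^ kl.1 / (Nat.factorial kl.1 : ℝ)
          * (poch m kl.2 * α ^ kl.2 / ((Nat.factorial kl.2 : ℝ) * (Nat.factorial kl.2 : ℝ))))
      / ((N : ℝ) + 1) := by
  -- auxiliary: the expanded double-sum summand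
  set G : ℕ → ℕ → ℝ := fun i t =>
    poch (1-m) i * poch m (N-i) / ((Nat.factorial (N+1) : ℝ))
      * (p ^ (i+t) * α ^ (N-i-t) * ((N-i).choose t : ℝ))
      / ((Nat.factorial i : ℝ) * (Nat.factorial (N-i) : ℝ)) with hG
  have step1 : ∑ ij ∈ Finset.HasAntidiagonal.antidiagonal N,
      poch (1-m) ij.1 * poch m ij.2 / poch 2 (ij.1 + ij.2) * p ^ ij.1 * (p + α) ^ ij.2
        / ((Nat.factorial ij.1 : ℝ) * (Nat.factorial ij.2 : ℝ))
      = ∑ i ∈ Finset.range (N+1), ∑ t ∈ Finset.range (N-i+1), G i t := by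
    rw [Finset.Nat.sum_antidiagonal_eq_sum_range_succ_mk]
    refine Finset.sum_congr rfl ?_
    intro i hi
    have hiN : i ≤ N := by simpa [Nat.lt_succ_iff] using hi
    have h1 : i + (N - i) = N := by omega
    rw [h1, poch_two, add_pow, Finset.mul_sum, Finset.sum_div]
    refine Finset.sum_congr rfl ?_
    intro t _
    rw [hG]
    simp only []
    rw [pow_add]
    ring
  have step2 : ∑ i ∈ Finset.range (N+1), ∑ t ∈ Finset.range (N-i+1), G i t
      = ∑ n ∈ Finset.range (N+1), ∑ r ∈ Finset.range (N-n+1), G (N-n-r) r := by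
    rw [Finset.sum_sigma', Finset.sum_sigma']
    refine Finset.sum_bij' (fun x _ => ⟨N - x.1 - x.2, x.2⟩)
      (fun y _ => ⟨N - y.1 - y.2, y.2⟩) ?_ ?_ ?_ ?_ ?_
    · rintro ⟨i, t⟩ hx
      simp only [Finset.mem_sigma, Finset.mem_range] at hx ⊢
      omega
    · rintro ⟨n, r⟩ hy
      simp only [Finset.mem_sigma, Finset.mem_range] at hy ⊢
      omega
    · rintro ⟨i, t⟩ hx
      simp only [Finset.mem_sigma, Finset.mem_range] at hx
      have h5 : N - (N - i - t) - t = i := by omega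
      simp [h5]
    · rintro ⟨n, r⟩ hy
      simp only [Finset.mem_sigma, Finset.mem_range] at hy
      have h5 : N - (N - n - r) - r = n := by omega
      simp [h5]
    · rintro ⟨i, t⟩ hx
      simp only [Finset.mem_sigma, Finset.mem_range] at hx
      have h5 : N - (N - i - t) - t = i := by omega
      show G i t = G (N - (N - i - t) - t) t
      rw [h5]
  have step3 : ∀ n ∈ Finset.range (N+1), ∑ r ∈ Finset.range (N-n+1), G (N-n-r) r
      = poch m n * α^n * p^(N-n)
          / ((Nat.factorial (N+1) : ℝ) * (Nat.factorial n : ℝ) * (Nat.factorial (N-n) : ℝ))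
        * poch ((n:ℝ)+1) (N-n) := by
    intro n hn
    have hnN : n ≤ N := by simpa [Nat.lt_succ_iff] using hn
    have hterm : ∀ r ∈ Finset.range (N-n+1), G (N-n-r) r
        = poch m n * α^n * p^(N-n)
            / ((Nat.factorial (N+1) : ℝ) * (Nat.factorial n : ℝ) * (Nat.factorial (N-n) : ℝ))
          * ((((N-n).choose r : ℕ) : ℝ) * poch (m + (n:ℝ)) r * poch (1-m) ((N-n) - r)) := by
      intro r hr
      have hrn : r ≤ N - n := by simpa [Nat.lt_succ_iff] using hr
      have e1 : N - (N-n-r) = n + r := by omega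
      have e2 : (N-n-r) + r = N - n := by omega
      have e3 : n + r - r = n := by omega
      rw [hG]
      simp only []
      rw [e1, e2, e3, poch_add]
      have hc : ((n+r).choose r : ℝ) * ((Nat.factorial r : ℝ) * (Nat.factorial n : ℝ))
          = (Nat.factorial (n+r) : ℝ) := by
        have := Nat.choose_mul_factorial_mul_factorial (Nat.le_add_left r n)
        rw [e3] at this
        push_cast [← this]; ring
      have ec : ((n+r).choose r : ℝ)
          = (Nat.factorial (n+r) : ℝ) / ((Nat.factorial r : ℝ) * (Nat.factorial n : ℝ)) := by
        rw [eq_div_iff (by positivity)]; exact hc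
      have hc2 : ((N-n).choose r : ℝ) * ((Nat.factorial r : ℝ) * (Nat.factorial (N-n-r) : ℝ))
          = (Nat.factorial (N-n) : ℝ) := by
        have h2 := Nat.choose_mul_factorial_mul_factorial hrn
        have e4 : (N-n) - r = N-n-r := by omega
        rw [e4] at h2
        push_cast [← h2]; ring
      have ec2 : ((N-n).choose r : ℝ)
          = (Nat.factorial (N-n) : ℝ) / ((Nat.factorial r : ℝ) * (Nat.factorial (N-n-r) : ℝ)) := by
        rw [eq_div_iff (by positivity)]; exact hc2
      rw [ec, ec2]
      have f1 : (Nat.factorial (N+1) : ℝ) ≠ 0 := by positivity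
      have f2 : (Nat.factorial (N-n-r) : ℝ) ≠ 0 := by positivity
      have f3 : (Nat.factorial (n+r) : ℝ) ≠ 0 := by positivity
      have f4 : (Nat.factorial r : ℝ) ≠ 0 := by positivity
      have f5 : (Nat.factorial n : ℝ) ≠ 0 := by positivity
      have f6 : (Nat.factorial (N-n) : ℝ) ≠ 0 := by positivity
      field_simp
    rw [Finset.sum_congr rfl hterm, ← Finset.mul_sum, poch_vandermonde]
    congr 1
    push_cast
    ring_nf
  rw [step1, step2, Finset.sum_congr rfl step3]
  rw [Finset.Nat.sum_antidiagonal_eq_sum_range_succ_mk]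
  have hrefl := Finset.sum_range_reflect (fun k =>
    p ^ k / (Nat.factorial k : ℝ)
      * (poch m (N-k) * α ^ (N-k) / ((Nat.factorial (N-k) : ℝ) * (Nat.factorial (N-k) : ℝ)))) (N+1)
  simp only [Nat.add_sub_cancel] at hrefl
  rw [← hrefl, Finset.sum_div]
  refine Finset.sum_congr rfl ?_
  intro n hn
  have hnN : n ≤ N := by simpa [Nat.lt_succ_iff] using hn
  have e8 : N - (N - n) = n := by omega
  rw [e8]
  have hpn := poch_nat_cast n (N-n)
  have e10 : n + (N-n) = N := by omega
  rw [e10] at hpn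
  have f5 : (Nat.factorial n : ℝ) ≠ 0 := by positivity
  have epoch : poch ((n:ℝ)+1) (N-n) = (Nat.factorial N : ℝ) / (Nat.factorial n : ℝ) := by
    rw [eq_div_iff f5]; rw [mul_comm] at hpn; exact hpn
  rw [epoch]
  have hNfac : (Nat.factorial (N+1) : ℝ) = ((N:ℝ)+1) * (Nat.factorial N : ℝ) := by
    rw [Nat.factorial_succ]; push_cast; ring
  rw [hNfac]
  have f6 : (Nat.factorial (N-n) : ℝ) ≠ 0 := by positivity
  have f7 : (Nat.factorial N : ℝ) ≠ 0 := by positivity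
  have f8 : ((N:ℝ)+1) ≠ 0 := by positivity
  field_simp
lemma summable_kummer_aux (a w : ℝ) :
    Summable (fun n : ℕ => ‖poch a n * w ^ n / ((Nat.factorial n : ℝ) * Nat.factorial n)‖) := by
  refine Summable.of_nonneg_of_le (fun n => norm_nonneg _) (fun n => ?_)
    (Real.summable_pow_div_factorial ((|a| + 1) * |w|))
  rw [Real.norm_eq_abs, abs_div, abs_mul, abs_pow]
  have hfac : (0:ℝ) < Nat.factorial n := by positivity
  rw [abs_of_pos (by positivity : (0:ℝ) < (Nat.factorial n : ℝ) * Nat.factorial n), mul_pow]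
  calc |poch a n| * |w| ^ n / ((Nat.factorial n : ℝ) * Nat.factorial n)
      ≤ ((|a| + 1) ^ n * Nat.factorial n) * |w| ^ n / ((Nat.factorial n : ℝ) * Nat.factorial n) := by
        gcongr
        exact abs_poch_le a n
    _ = (|a| + 1) ^ n * |w| ^ n / Nat.factorial n := by
        field_simp

lemma summable_exp_aux (w : ℝ) :
    Summable (fun k : ℕ => ‖w ^ k / (Nat.factorial k : ℝ)‖) := by
  refine Summable.of_nonneg_of_le (fun n => norm_nonneg _) (fun n => ?_)
    (Real.summable_pow_div_factorial |w|)
  rw [Real.norm_eq_abs, abs_div, abs_pow, abs_of_pos (by positivity : (0:ℝ) < (Nat.factorial n : ℝ))]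

lemma summable_phi2 (b₁ b₂ x y : ℝ) :
    Summable (fun ij : ℕ × ℕ =>
      poch b₁ ij.1 * poch b₂ ij.2 / poch 2 (ij.1 + ij.2) * x ^ ij.1 * y ^ ij.2
        / ((Nat.factorial ij.1 : ℝ) * Nat.factorial ij.2)) := by
  apply Summable.of_norm
  have hS : Summable (fun ij : ℕ × ℕ =>
      ((|b₁| + 1) * |x|) ^ ij.1 / Nat.factorial ij.1
        * (((|b₂| + 1) * |y|) ^ ij.2 / Nat.factorial ij.2)) :=
    Summable.mul_of_nonneg (f := fun i : ℕ => ((|b₁| + 1) * |x|) ^ i / Nat.factorial i)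
      (g := fun j : ℕ => ((|b₂| + 1) * |y|) ^ j / Nat.factorial j)
      (Real.summable_pow_div_factorial _)
      (Real.summable_pow_div_factorial _)
      (fun n => by positivity) (fun n => by positivity)
  refine Summable.of_nonneg_of_le (fun _ => norm_nonneg _) (fun ij => ?_) hS
  obtain ⟨i, j⟩ := ij
  simp only [Real.norm_eq_abs]
  rw [poch_two]
  have hfac : ((Nat.factorial i : ℝ) * Nat.factorial j) ≤ (Nat.factorial (i + j + 1) : ℝ) := by
    have h1 : Nat.factorial i * Nat.factorial j ∣ Nat.factorial (i + j) :=
      Nat.factorial_mul_factorial_dvd_factorial_add i j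
    have h2 : Nat.factorial i * Nat.factorial j ≤ Nat.factorial (i + j) :=
      Nat.le_of_dvd (Nat.factorial_pos _) h1
    have h3 : Nat.factorial (i + j) ≤ Nat.factorial (i + j + 1) :=
      Nat.factorial_le (by omega)
    calc ((Nat.factorial i : ℝ) * Nat.factorial j) = ((Nat.factorial i * Nat.factorial j : ℕ) : ℝ) := by push_cast; ring
      _ ≤ (Nat.factorial (i+j) : ℝ) := by exact_mod_cast h2
      _ ≤ _ := by exact_mod_cast h3
  have key : |poch b₁ i * poch b₂ j / (Nat.factorial (i+j+1) : ℝ) * x ^ i * y ^ j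
      / ((Nat.factorial i : ℝ) * Nat.factorial j)|
      = |poch b₁ i| * |poch b₂ j| * |x| ^ i * |y| ^ j
        / ((Nat.factorial (i+j+1) : ℝ) * ((Nat.factorial i : ℝ) * Nat.factorial j)) := by
    rw [abs_div, abs_mul, abs_mul, abs_div, abs_mul, abs_pow, abs_pow]
    rw [abs_of_pos (by positivity : (0:ℝ) < (Nat.factorial (i+j+1) : ℝ)),
      abs_of_pos (by positivity : (0:ℝ) < (Nat.factorial i : ℝ) * Nat.factorial j)]
    ring
  rw [key]
  have hnum : |poch b₁ i| * |poch b₂ j| * |x| ^ i * |y| ^ j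
      ≤ ((|b₁| + 1) ^ i * Nat.factorial i) * ((|b₂| + 1) ^ j * Nat.factorial j) * |x| ^ i * |y| ^ j := by
    gcongr <;> [exact abs_poch_le b₁ i; exact abs_poch_le b₂ j]
  have hden : ((Nat.factorial i : ℝ) * Nat.factorial j) * ((Nat.factorial i : ℝ) * Nat.factorial j)
      ≤ (Nat.factorial (i+j+1) : ℝ) * ((Nat.factorial i : ℝ) * Nat.factorial j) := by
    gcongr
  calc |poch b₁ i| * |poch b₂ j| * |x| ^ i * |y| ^ j
        / ((Nat.factorial (i+j+1) : ℝ) * ((Nat.factorial i : ℝ) * Nat.factorial j))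
      ≤ (((|b₁| + 1) ^ i * Nat.factorial i) * ((|b₂| + 1) ^ j * Nat.factorial j) * |x| ^ i * |y| ^ j)
        / (((Nat.factorial i : ℝ) * Nat.factorial j) * ((Nat.factorial i : ℝ) * Nat.factorial j)) := by
        apply div_le_div₀ (by positivity) hnum (by positivity) hden
    _ = ((|b₁| + 1) * |x|) ^ i / Nat.factorial i * (((|b₂| + 1) * |y|) ^ j / Nat.factorial j) := by
        rw [mul_pow, mul_pow]
        field_simp

lemma tsum_nat_prod_antidiagonal {f : ℕ × ℕ → ℝ} (hf : Summable f) :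
    ∑' p : ℕ × ℕ, f p = ∑' n : ℕ, ∑ kl ∈ Finset.HasAntidiagonal.antidiagonal n, f kl := by
  conv_rhs => congr; ext n; rw [← Finset.sum_finset_coe, ← tsum_fintype (L := .unconditional _)]
  rw [← Finset.HasAntidiagonal.sigmaAntidiagonalEquivProd.tsum_eq f]
  exact Summable.tsum_sigma' (fun n => (hasSum_fintype _).summable)
    (Finset.HasAntidiagonal.sigmaAntidiagonalEquivProd.summable_iff.mpr hf)

lemma real_exp_tsum (u : ℝ) : Real.exp u = ∑' k : ℕ, u ^ k / (Nat.factorial k : ℝ) := by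
  rw [Real.exp_eq_exp_ℝ, NormedSpace.exp_eq_tsum_div]

/-- closed form of the lower incomplete MGF of the Rician shadowed
distribution. -/
theorem lower_IMGF_ricianShadowed (K m γbar : ℝ)
    (hK : 0 ≤ K) (hm : 0 < m) (hγ : 0 < γbar)
    (s z : ℝ) (hz : 0 ≤ z) :
    ∫ x in (0:ℝ)..z, Real.exp (s * x) * ricianShadowedPDF K m γbar x
      = m ^ m * (1 + K) / (γbar * (K + m) ^ m) * z
        * Phi2 (1 - m) m 2
            ((s - (1 + K) / γbar) * z)
            ((s - (1 + K) / γbar * (m / (K + m))) * z) := by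
  have hγ' : γbar ≠ 0 := ne_of_gt hγ
  have hKm : (0:ℝ) < K + m := by linarith
  have hKm' : K + m ≠ 0 := ne_of_gt hKm
  set C : ℝ := (1 + K) * m ^ m / (γbar * (K + m) ^ m) with hC
  set p : ℝ := s - (1 + K) / γbar with hp
  set α : ℝ := K * (1 + K) / ((K + m) * γbar) with hα
  set c : ℕ → ℝ := fun N => ∑ kl ∈ Finset.HasAntidiagonal.antidiagonal N,
    p ^ kl.1 / (Nat.factorial kl.1 : ℝ)
      * (poch m kl.2 * α ^ kl.2 / ((Nat.factorial kl.2 : ℝ) * Nat.factorial kl.2)) with hc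
  have hcz : ∀ (x : ℝ) (N : ℕ), (∑ kl ∈ Finset.HasAntidiagonal.antidiagonal N,
      (p*x) ^ kl.1 / (Nat.factorial kl.1 : ℝ)
        * (poch m kl.2 * (α*x) ^ kl.2 / ((Nat.factorial kl.2 : ℝ) * Nat.factorial kl.2)))
      = c N * x ^ N := by
    intro x N
    rw [hc]
    simp only []
    rw [Finset.sum_mul]
    refine Finset.sum_congr rfl ?_
    intro kl hkl
    have hN : kl.1 + kl.2 = N := Finset.HasAntidiagonal.mem_antidiagonal.mp hkl
    rw [← hN, pow_add, mul_pow, mul_pow]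
    ring
  have hseries : ∀ x : ℝ, Real.exp (p*x) * kummerM m 1 (α*x) = ∑' N : ℕ, c N * x ^ N := by
    intro x
    have hk : kummerM m 1 (α*x)
        = ∑' n : ℕ, poch m n * (α*x)^n / ((Nat.factorial n : ℝ) * Nat.factorial n) := by
      simp only [kummerM]
      refine tsum_congr fun n => ?_
      rw [poch_one]
      ring
    rw [real_exp_tsum (p*x), hk,
      tsum_mul_tsum_eq_tsum_sum_antidiagonal_of_summable_norm (summable_exp_aux (p*x))
        (summable_kummer_aux m (α*x))]
    exact tsum_congr fun N => hcz x N
  have hsumc : Summable (fun N : ℕ => ‖c N * z ^ N‖) := by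
    have h := summable_norm_sum_mul_antidiagonal_of_summable_norm
      (summable_exp_aux (p*z)) (summable_kummer_aux m (α*z))
    refine h.congr fun N => ?_
    rw [hcz z N]
  have hint1 : ∀ N : ℕ, Integrable (fun x : ℝ => c N * x ^ N)
      (volume.restrict (Set.Ioc (0:ℝ) z)) :=
    fun N => (continuous_const.mul (continuous_pow N)).integrableOn_Ioc
  have hIioc : ∀ N : ℕ, (∫ x in Set.Ioc (0:ℝ) z, ‖c N * x ^ N‖)
      = ‖c N‖ * (z^(N+1) / ((N:ℝ)+1)) := by
    intro N
    rw [← intervalIntegral.integral_of_le hz]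
    have hEq : Set.EqOn (fun x : ℝ => ‖c N * x ^ N‖) (fun x : ℝ => ‖c N‖ * x ^ N)
        (Set.uIcc (0:ℝ) z) := by
      intro x hx
      rw [Set.uIcc_of_le hz] at hx
      have hx0 : 0 ≤ x := hx.1
      simp only [norm_mul, norm_pow, Real.norm_eq_abs, abs_of_nonneg hx0]
    rw [intervalIntegral.integral_congr hEq, intervalIntegral.integral_const_mul, integral_pow]
    rw [zero_pow (by omega : N+1 ≠ 0)]
    push_cast
    ring
  have hint2 : Summable fun N : ℕ => ∫ x in Set.Ioc (0:ℝ) z, ‖c N * x ^ N‖ := by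
    refine Summable.of_nonneg_of_le (fun N => ?_) (fun N => ?_) (hsumc.mul_left z)
    · rw [hIioc N]; positivity
    · rw [hIioc N]
      have h1 : ‖c N * z ^ N‖ = ‖c N‖ * z ^ N := by
        rw [norm_mul, norm_pow, Real.norm_eq_abs z, abs_of_nonneg hz]
      rw [h1]
      have h2 : z^(N+1) / ((N:ℝ)+1) ≤ z^(N+1) := by
        apply div_le_self (by positivity)
        have hN0 : (0:ℝ) ≤ (N:ℝ) := Nat.cast_nonneg N
        linarith
      calc ‖c N‖ * (z^(N+1) / ((N:ℝ)+1)) ≤ ‖c N‖ * z^(N+1) := by gcongr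
        _ = z * (‖c N‖ * z ^ N) := by rw [pow_succ]; ring
  have hInt : (∫ x in (0:ℝ)..z, Real.exp (p*x) * kummerM m 1 (α*x))
      = ∑' N : ℕ, c N * (z^(N+1) / ((N:ℝ)+1)) := by
    rw [intervalIntegral.integral_of_le hz]
    have hfun : (fun x : ℝ => Real.exp (p*x) * kummerM m 1 (α*x))
        = fun x : ℝ => ∑' N : ℕ, c N * x ^ N := funext hseries
    rw [hfun, ← MeasureTheory.integral_tsum_of_summable_integral_norm hint1 hint2]
    refine tsum_congr fun N => ?_
    rw [← intervalIntegral.integral_of_le hz, intervalIntegral.integral_const_mul, integral_pow]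
    rw [zero_pow (by omega : N+1 ≠ 0)]
    push_cast
    ring
  have hLHS : (∫ x in (0:ℝ)..z, Real.exp (s * x) * ricianShadowedPDF K m γbar x)
      = C * ∫ x in (0:ℝ)..z, Real.exp (p*x) * kummerM m 1 (α*x) := by
    rw [← intervalIntegral.integral_const_mul]
    refine intervalIntegral.integral_congr ?_
    intro x hx
    rw [Set.uIcc_of_le hz] at hx
    have hx0 : 0 ≤ x := hx.1
    simp only [ricianShadowedPDF, if_neg (not_lt.mpr hx0)]
    have h2 : K * (1 + K) * x / ((K + m) * γbar) = α * x := by rw [hα]; ring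
    rw [h2]
    have h1 : Real.exp (s*x) * Real.exp (-((1 + K) * x) / γbar) = Real.exp (p*x) := by
      rw [← Real.exp_add]
      congr 1
      rw [hp]
      field_simp
      ring
    calc Real.exp (s*x) * ((1 + K) * m ^ m / (γbar * (K + m) ^ m)
          * Real.exp (-((1 + K) * x) / γbar) * kummerM m 1 (α*x))
        = (1 + K) * m ^ m / (γbar * (K + m) ^ m)
          * (Real.exp (s*x) * Real.exp (-((1 + K) * x) / γbar) * kummerM m 1 (α*x)) := by ring
      _ = C * (Real.exp (p*x) * kummerM m 1 (α*x)) := by rw [h1, hC]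
  have hq : s - (1 + K) / γbar * (m / (K + m)) = p + α := by
    rw [hp, hα]
    field_simp
    ring
  have hRHS : Phi2 (1-m) m 2 (p * z) ((p + α) * z)
      = ∑' N : ℕ, (c N * z ^ N) / ((N:ℝ)+1) := by
    have hsumm := summable_phi2 (1-m) m (p*z) ((p+α)*z)
    have e1 : Phi2 (1-m) m 2 (p*z) ((p+α)*z)
        = ∑' ij : ℕ × ℕ, poch (1-m) ij.1 * poch m ij.2 / poch 2 (ij.1 + ij.2)
            * (p*z) ^ ij.1 * ((p+α)*z) ^ ij.2
            / ((Nat.factorial ij.1 : ℝ) * Nat.factorial ij.2) := by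
      simp only [Phi2]
      exact (Summable.tsum_prod' hsumm fun b => hsumm.prod_factor b).symm
    rw [e1, tsum_nat_prod_antidiagonal hsumm]
    refine tsum_congr fun N => ?_
    have h3 : ∀ kl : ℕ × ℕ, poch (1-m) kl.1 * poch m kl.2 / poch 2 (kl.1 + kl.2)
        * (p*z) ^ kl.1 * ((p+α)*z) ^ kl.2 / ((Nat.factorial kl.1 : ℝ) * Nat.factorial kl.2)
        = poch (1-m) kl.1 * poch m kl.2 / poch 2 (kl.1 + kl.2)
        * (p*z) ^ kl.1 * ((p*z)+(α*z)) ^ kl.2 / ((Nat.factorial kl.1 : ℝ) * Nat.factorial kl.2) := by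
      intro kl
      have : (p+α)*z = p*z + α*z := by ring
      rw [this]
    rw [Finset.sum_congr rfl (fun kl _ => h3 kl), core_identity m (p*z) (α*z) N, hcz z N]
  rw [hLHS, hInt, hq, hRHS]
  rw [show m ^ m * (1 + K) / (γbar * (K + m) ^ m) = C by rw [hC]; ring]
  rw [mul_assoc]
  congr 1
  rw [← tsum_mul_left]
  refine tsum_congr fun N => ?_
  rw [pow_succ]
  ring
end

section
/- Let γ_b and γ_e be independent exponentially distributed random variables with means γ̄_b > 0 and γ̄_e > 0 respectively (i.e., γ_b has density (1/γ̄_b)e^{−x/γ̄_b} on [0,∞) and similarly for γ_e). Then for every R_S ≥ 0, the outage probability of secrecy capacity is P( log₂((1+γ_b)/(1+γ_e)) ≤ R_S ) = 1 − e^{−(2^{R_S}−1)/γ̄_b} · γ̄_b / (γ̄_b + 2^{R_S} γ̄_e). -/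
open MeasureTheory Real ProbabilityTheory Set

lemma integral_exp_neg_mul_Ioi_zero' {b : ℝ} (hb : 0 < b) :
    ∫ x in Ioi (0:ℝ), Real.exp (-(b * x)) = 1 / b := by
  have h := integral_comp_mul_left_Ioi (fun u => Real.exp (-u)) 0 hb
  simp only [mul_zero, integral_exp_neg_Ioi, neg_zero, Real.exp_zero, smul_eq_mul, mul_one] at h
  rw [h, one_div]

/-- classical Rayleigh/Rayleigh secrecy outage formula. If `γb`
and `γe` are independent exponential random variables with means `γ̄_b` and
`γ̄_e`, then
`P(C_S ≤ R_S) = 1 - e^{-(2^{R_S}-1)/γ̄_b} · γ̄_b/(γ̄_b + 2^{R_S} γ̄_e)`. -/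
theorem secrecy_outage_rayleigh_rayleigh {Ω : Type*} [MeasurableSpace Ω]
    (P : Measure Ω) [IsProbabilityMeasure P]
    (γb γe : Ω → ℝ)
    (hγb : Measurable γb) (hγe : Measurable γe)
    (γbbar γebar : ℝ) (hγbbar : 0 < γbbar) (hγebar : 0 < γebar)
    (hfb : Measure.map γb P = volume.withDensity fun x =>
      ENNReal.ofReal (if x < 0 then 0 else Real.exp (-x / γbbar) / γbbar))
    (hfe : Measure.map γe P = volume.withDensity fun x =>
      ENNReal.ofReal (if x < 0 then 0 else Real.exp (-x / γebar) / γebar))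
    (hindep : IndepFun γb γe P)
    (RS : ℝ) (hRS : 0 ≤ RS) :
    (P {ω | Real.logb 2 ((1 + γb ω) / (1 + γe ω)) ≤ RS}).toReal
      = 1 - Real.exp (-((2:ℝ) ^ RS - 1) / γbbar)
            * γbbar / (γbbar + (2:ℝ) ^ RS * γebar) := by
  set t : ℝ := (2:ℝ) ^ RS with ht
  have ht1 : 1 ≤ t := Real.one_le_rpow one_le_two hRS
  have ht0 : 0 < t := lt_of_lt_of_le one_pos ht1
  set c : ℝ := t - 1 with hcdef
  have hc0 : 0 ≤ c := by simp only [hcdef]; linarith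
  set rb : ℝ := 1 / γbbar with hrbdef
  set re : ℝ := 1 / γebar with hredef
  have hrb : 0 < rb := by positivity
  have hre : 0 < re := by positivity
  -- density functions are exponential pdfs
  have hdb : (fun x => ENNReal.ofReal (if x < 0 then 0 else Real.exp (-x / γbbar) / γbbar))
      = exponentialPDF rb := by
    funext x
    rw [exponentialPDF_eq]
    congr 1
    rcases lt_or_ge x 0 with hx | hx
    · rw [if_pos hx, if_neg (not_le.mpr hx)]
    · rw [if_neg (not_lt.mpr hx), if_pos hx, hrbdef, one_div_mul_eq_div,
        one_div_mul_eq_div, neg_div]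
  have hde : (fun x => ENNReal.ofReal (if x < 0 then 0 else Real.exp (-x / γebar) / γebar))
      = exponentialPDF re := by
    funext x
    rw [exponentialPDF_eq]
    congr 1
    rcases lt_or_ge x 0 with hx | hx
    · rw [if_pos hx, if_neg (not_le.mpr hx)]
    · rw [if_neg (not_lt.mpr hx), if_pos hx, hredef, one_div_mul_eq_div,
        one_div_mul_eq_div, neg_div]
  set μb : Measure ℝ := volume.withDensity (exponentialPDF rb) with hμb
  set μe : Measure ℝ := volume.withDensity (exponentialPDF re) with hμe
  have hfb' : Measure.map γb P = μb := by rw [hfb, hdb]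
  have hfe' : Measure.map γe P = μe := by rw [hfe, hde]
  have hμbprob : IsProbabilityMeasure μb := by
    constructor
    rw [hμb, withDensity_apply _ MeasurableSet.univ, Measure.restrict_univ,
      lintegral_exponentialPDF_eq_one hrb]
  have hμeprob : IsProbabilityMeasure μe := by
    constructor
    rw [hμe, withDensity_apply _ MeasurableSet.univ, Measure.restrict_univ,
      lintegral_exponentialPDF_eq_one hre]
  -- a.e. nonnegativity
  have hbae : ∀ᵐ ω ∂P, 0 ≤ γb ω := by
    rw [ae_iff]
    have : {ω | ¬ 0 ≤ γb ω} = γb ⁻¹' (Iio 0) := by ext ω; simp [not_le]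
    rw [this, ← Measure.map_apply hγb measurableSet_Iio, hfb',
      hμb, withDensity_apply _ measurableSet_Iio]
    exact lintegral_exponentialPDF_of_nonpos le_rfl
  have heae : ∀ᵐ ω ∂P, 0 ≤ γe ω := by
    rw [ae_iff]
    have : {ω | ¬ 0 ≤ γe ω} = γe ⁻¹' (Iio 0) := by ext ω; simp [not_le]
    rw [this, ← Measure.map_apply hγe measurableSet_Iio, hfe',
      hμe, withDensity_apply _ measurableSet_Iio]
    exact lintegral_exponentialPDF_of_nonpos le_rfl
  -- rewrite the event
  have hset : {ω | Real.logb 2 ((1 + γb ω) / (1 + γe ω)) ≤ RS}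
      =ᵐ[P] {ω | γb ω ≤ t * γe ω + c} := by
    filter_upwards [hbae, heae] with ω hb0 he0
    have h1b : (0:ℝ) < 1 + γb ω := by linarith
    have h1e : (0:ℝ) < 1 + γe ω := by linarith
    have hx : 0 < (1 + γb ω) / (1 + γe ω) := div_pos h1b h1e
    show (Real.logb 2 ((1 + γb ω) / (1 + γe ω)) ≤ RS) = (γb ω ≤ t * γe ω + c)
    rw [eq_iff_iff, Real.logb_le_iff_le_rpow one_lt_two hx, ← ht, div_le_iff₀ h1e]
    constructor <;> intro h <;> nlinarith
  have hS : MeasurableSet {p : ℝ × ℝ | p.1 ≤ t * p.2 + c} :=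
    measurableSet_le measurable_fst (by fun_prop)
  have hPA : P {ω | γb ω ≤ t * γe ω + c}
      = (μb.prod μe) {p : ℝ × ℝ | p.1 ≤ t * p.2 + c} := by
    have hmap := (ProbabilityTheory.indepFun_iff_map_prod_eq_prod_map_map
      hγb.aemeasurable hγe.aemeasurable).mp hindep
    have : {ω | γb ω ≤ t * γe ω + c}
        = (fun ω => (γb ω, γe ω)) ⁻¹' {p : ℝ × ℝ | p.1 ≤ t * p.2 + c} := rfl
    rw [this, ← Measure.map_apply (hγb.prodMk hγe) hS, hmap, hfb', hfe']
  -- compute the product measure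
  have hexpb_meas : Measurable (exponentialPDF rb) :=
    (measurable_exponentialPDFReal rb).ennreal_ofReal
  have hexpe_meas : Measurable (exponentialPDF re) :=
    (measurable_exponentialPDFReal re).ennreal_ofReal
  set h : ℝ → ℝ := fun y =>
    if 0 ≤ y then re * Real.exp (-(re * y)) * (1 - Real.exp (-(rb * (t * y + c)))) else 0
    with hhdef
  have hFmeas : Measurable (fun y : ℝ =>
      ENNReal.ofReal (if 0 ≤ t * y + c then 1 - Real.exp (-(rb * (t * y + c))) else 0)) := by
    apply Measurable.ennreal_ofReal
    apply Measurable.ite _ (by fun_prop) (by fun_prop)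
    exact measurableSet_le measurable_const (by fun_prop)
  have hprod : (μb.prod μe) {p : ℝ × ℝ | p.1 ≤ t * p.2 + c}
      = ∫⁻ y, ENNReal.ofReal (h y) := by
    rw [Measure.prod_apply_symm hS]
    have hpre : ∀ y : ℝ, ((fun x => (x, y)) ⁻¹' {p : ℝ × ℝ | p.1 ≤ t * p.2 + c})
        = Iic (t * y + c) := fun y => rfl
    have hIic : ∀ y : ℝ, μb (Iic (t * y + c))
        = ENNReal.ofReal (if 0 ≤ t * y + c then 1 - Real.exp (-(rb * (t * y + c))) else 0) := by
      intro y
      rw [hμb, withDensity_apply _ measurableSet_Iic,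
        lintegral_exponentialPDF_eq_antiDeriv hrb]
    simp_rw [hpre, hIic]
    rw [hμe, lintegral_withDensity_eq_lintegral_mul _ hexpe_meas hFmeas]
    apply lintegral_congr
    intro y
    simp only [Pi.mul_apply]
    rcases lt_or_ge y 0 with hy | hy
    · rw [exponentialPDF_of_neg hy, zero_mul, hhdef]
      simp [not_le.mpr hy]
    · have hty : 0 ≤ t * y + c := by nlinarith
      rw [exponentialPDF_of_nonneg hy, if_pos hty, hhdef]
      simp only [if_pos hy]
      rw [← ENNReal.ofReal_mul (by positivity)]
  -- g : the expanded integrand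
  set g : ℝ → ℝ := fun y => re * Real.exp (-(re * y))
      - re * Real.exp (-(rb * c)) * Real.exp (-((re + rb * t) * y)) with hgdef
  have hexp_split : ∀ y : ℝ, 0 ≤ y → re * Real.exp (-(re * y))
      * (1 - Real.exp (-(rb * (t * y + c)))) = g y := by
    intro y hy
    have : Real.exp (-(re * y)) * Real.exp (-(rb * (t * y + c)))
        = Real.exp (-(rb * c)) * Real.exp (-((re + rb * t) * y)) := by
      rw [← Real.exp_add, ← Real.exp_add]; congr 1; ring
    rw [hgdef]
    simp only [mul_sub, mul_one]
    rw [mul_assoc, this]; ring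
  have hind : h = Set.indicator (Ici (0:ℝ)) g := by
    funext y
    rcases lt_or_ge y 0 with hy | hy
    · rw [hhdef]
      simp [not_le.mpr hy, Set.indicator_of_notMem (not_le.mpr hy : ¬ (0:ℝ) ≤ y)]
    · rw [hhdef]
      rw [Set.indicator_of_mem (Set.mem_Ici.mpr hy)]
      simp only [if_pos hy]
      exact hexp_split y hy
  have hrt : 0 < re + rb * t := by positivity
  have hint1 : IntegrableOn (fun y => re * Real.exp (-(re * y))) (Ioi (0:ℝ)) := by
    have := (exp_neg_integrableOn_Ioi 0 hre).const_mul re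
    simp only [← neg_mul] at this ⊢; exact this
  have hint2 : IntegrableOn
      (fun y => re * Real.exp (-(rb * c)) * Real.exp (-((re + rb * t) * y))) (Ioi (0:ℝ)) := by
    have := (exp_neg_integrableOn_Ioi 0 hrt).const_mul (re * Real.exp (-(rb * c)))
    simp only [← neg_mul] at this ⊢; exact this
  have hgint : IntegrableOn g (Ici (0:ℝ)) := by
    rw [integrableOn_Ici_iff_integrableOn_Ioi]
    exact hint1.sub hint2
  have hhint : Integrable h := by
    rw [hind, ← integrable_indicator_iff measurableSet_Ici] at *
    exact hgint
  have hhnn : ∀ y, 0 ≤ h y := by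
    intro y
    rw [hhdef]
    rcases lt_or_ge y 0 with hy | hy
    · simp [not_le.mpr hy]
    · simp only [if_pos hy]
      have hty0 : 0 ≤ t * y + c := by nlinarith [mul_nonneg ht0.le hy]
      have hty : 0 ≤ rb * (t * y + c) := mul_nonneg hrb.le hty0
      have : Real.exp (-(rb * (t * y + c))) ≤ 1 := Real.exp_le_one_iff.mpr (by linarith)
      have h1 : 0 ≤ 1 - Real.exp (-(rb * (t * y + c))) := by linarith
      positivity
  -- from lintegral to integral
  have hlint : ∫⁻ y, ENNReal.ofReal (h y) = ENNReal.ofReal (∫ y, h y) := by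
    rw [MeasureTheory.ofReal_integral_eq_lintegral_ofReal hhint
      (Filter.Eventually.of_forall hhnn)]
  -- compute the integral
  have hval : ∫ y, h y = 1 - re * Real.exp (-(rb * c)) / (re + rb * t) := by
    rw [hind, MeasureTheory.integral_indicator measurableSet_Ici,
      MeasureTheory.integral_Ici_eq_integral_Ioi, hgdef]
    rw [MeasureTheory.integral_sub hint1 hint2,
      integral_const_mul, integral_const_mul,
      integral_exp_neg_mul_Ioi_zero' hre, integral_exp_neg_mul_Ioi_zero' hrt]
    field_simp
  have hfinal : P {ω | Real.logb 2 ((1 + γb ω) / (1 + γe ω)) ≤ RS}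
      = ENNReal.ofReal (1 - re * Real.exp (-(rb * c)) / (re + rb * t)) := by
    rw [measure_congr hset, hPA, hprod, hlint, hval]
  rw [hfinal, ENNReal.toReal_ofReal]
  · have hrbc : rb * c = c / γbbar := by rw [hrbdef, one_div_mul_eq_div]
    rw [hrbc, ← neg_div]
    have hden : γbbar + t * γebar ≠ 0 := by positivity
    rw [hrbdef, hredef] at *
    field_simp
  · have : re * Real.exp (-(rb * c)) / (re + rb * t) ≤ 1 := by
      rw [div_le_one hrt]
      have h1 : Real.exp (-(rb * c)) ≤ 1 := Real.exp_le_one_iff.mpr (by nlinarith)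
      nlinarith
    linarith
end
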